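/- Let τ > 0, γ > 0, g > 0 and let a : ℝ → ℝ be continuous. There exists a function w : (0, τ] → (0, ∞), continuous on (0, τ], differentiable on (0, τ) with w'(t) = γ w(t)(a(t) − w(t)) for all t ∈ (0, τ), whose right-limit at 0 exists and equals g · w(τ), if and only if ln g + γ ∫₀^τ a(t) dt > 0. Moreover, when it exists, such a function is unique. -/

import Mathlib

open Real Set Filter intervalIntegral

/-- A positive solution of the impulsive periodic logistic equation
`w' = γ w (a - w)` on `(0, τ)`, positive and continuous on `(0, τ]`,
whose right-limit at `0` equals `g · w(τ)` (linear pulse). -/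
def IsPeriodicPulseLogisticSolution (τ γ g : ℝ) (a w : ℝ → ℝ) : Prop :=
  ContinuousOn w (Set.Ioc 0 τ) ∧
  (∀ t ∈ Set.Ioc (0:ℝ) τ, 0 < w t) ∧
  (∀ t ∈ Set.Ioo (0:ℝ) τ, HasDerivAt w (γ * w t * (a t - w t)) t) ∧
  Filter.Tendsto w (nhdsWithin (0:ℝ) (Set.Ioi 0)) (nhds (g * w τ))

theorem stmt_18 (τ γ g : ℝ) (a : ℝ → ℝ)
    (hτ : 0 < τ) (hγ : 0 < γ) (hg : 0 < g) (ha : Continuous a) :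
    ((∃ w : ℝ → ℝ, IsPeriodicPulseLogisticSolution τ γ g a w) ↔
      0 < Real.log g + γ * ∫ t in (0:ℝ)..τ, a t) ∧
    (∀ w₁ w₂ : ℝ → ℝ, IsPeriodicPulseLogisticSolution τ γ g a w₁ →
      IsPeriodicPulseLogisticSolution τ γ g a w₂ →
      ∀ t ∈ Set.Ioc (0:ℝ) τ, w₁ t = w₂ t) := by
  -- A(t) = ∫₀ᵗ a
  set A : ℝ → ℝ := fun t => ∫ s in (0:ℝ)..t, a s with hAdef
  have hA : ∀ t, HasDerivAt A (a t) t := fun t =>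
    integral_hasDerivAt_right (ha.intervalIntegrable 0 t)
      (ha.stronglyMeasurableAtFilter _ _) ha.continuousAt
  have hAcont : Continuous A := by
    refine continuous_iff_continuousAt.2 fun t => (hA t).continuousAt
  set E : ℝ → ℝ := fun t => Real.exp (γ * A t) with hEdef
  have hEpos : ∀ t, 0 < E t := fun t => Real.exp_pos _
  have hE : ∀ t, HasDerivAt E (γ * a t * E t) t := by
    intro t
    have := ((hA t).const_mul γ).exp
    simpa [mul_comm] using this
  have hEcont : Continuous E := by
    refine continuous_iff_continuousAt.2 fun t => (hE t).continuousAt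
  set B : ℝ → ℝ := fun t => ∫ s in (0:ℝ)..t, γ * E s with hBdef
  have hBc : Continuous fun s => γ * E s := continuous_const.mul hEcont
  have hB : ∀ t, HasDerivAt B (γ * E t) t := fun t =>
    integral_hasDerivAt_right (hBc.intervalIntegrable 0 t)
      (hBc.stronglyMeasurableAtFilter _ _) hBc.continuousAt
  have hBcont : Continuous B := by
    refine continuous_iff_continuousAt.2 fun t => (hB t).continuousAt
  have hBnonneg : ∀ t, 0 ≤ t → 0 ≤ B t := by
    intro t ht
    exact intervalIntegral.integral_nonneg ht fun s _ => (mul_pos hγ (hEpos s)).le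
  have hBτ : 0 < B τ :=
    intervalIntegral.intervalIntegral_pos_of_pos (hBc.intervalIntegrable 0 τ)
      (fun s => mul_pos hγ (hEpos s)) hτ
  have hA0 : A 0 = 0 := intervalIntegral.integral_same
  have hE0 : E 0 = 1 := by simp [hEdef, hA0]
  have hB0 : B 0 = 0 := intervalIntegral.integral_same
  -- the condition is equivalent to 1 < g * E τ
  have hcond : (0 < Real.log g + γ * ∫ t in (0:ℝ)..τ, a t) ↔ 1 < g * E τ := by
    rw [← Real.log_pos_iff (mul_pos hg (hEpos τ)).le]
    rw [Real.log_mul (ne_of_gt hg) (ne_of_gt (hEpos τ)), hEdef, Real.log_exp]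
  -- Key: any solution w satisfies E t / w t - B t = 1 / (g * w τ) on Ioc 0 τ
  have key : ∀ w : ℝ → ℝ, IsPeriodicPulseLogisticSolution τ γ g a w →
      ∀ t ∈ Set.Ioc (0:ℝ) τ, E t / w t - B t = 1 / (g * w τ) := by
    intro w hw
    obtain ⟨hwc, hwp, hwd, hwl⟩ := hw
    have hwτ : 0 < w τ := hwp τ ⟨hτ, le_refl τ⟩
    set F : ℝ → ℝ := fun t => E t / w t - B t with hFdef
    have hF0 : ∀ t ∈ Set.Ioo (0:ℝ) τ, HasDerivAt F 0 t := by
      intro t ht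
      have hwt : w t ≠ 0 := ne_of_gt (hwp t ⟨ht.1, ht.2.le⟩)
      have h1 := ((hE t).div (hwd t ht) hwt).sub (hB t)
      refine h1.congr_deriv ?_
      field_simp
      ring
    have hFconst : ∀ t ∈ Set.Ioc (0:ℝ) τ, F t = F τ := by
      intro t ht
      have hFcont : ContinuousOn F (Set.Icc t τ) := by
        apply ContinuousOn.sub _ hBcont.continuousOn
        have hsub : Set.Icc t τ ⊆ Set.Ioc 0 τ := fun x hx =>
          ⟨lt_of_lt_of_le ht.1 hx.1, hx.2⟩
        exact ContinuousOn.div hEcont.continuousOn (hwc.mono hsub)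
          fun x hx => ne_of_gt (hwp x (hsub hx))
      have := constant_of_has_deriv_right_zero hFcont (fun x hx =>
        (hF0 x ⟨lt_of_lt_of_le ht.1 hx.1, hx.2⟩).hasDerivWithinAt)
      exact (this τ ⟨ht.2, le_refl τ⟩).symm
    -- limit of F at 0⁺
    have hgw : g * w τ ≠ 0 := ne_of_gt (mul_pos hg hwτ)
    have hFlim : Tendsto F (nhdsWithin 0 (Set.Ioi 0)) (nhds (1 / (g * w τ))) := by
      have hEl : Tendsto E (nhdsWithin 0 (Set.Ioi 0)) (nhds 1) := by
        simpa [hE0] using (hEcont.tendsto 0).mono_left nhdsWithin_le_nhds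
      have hBl : Tendsto B (nhdsWithin 0 (Set.Ioi 0)) (nhds 0) := by
        simpa [hB0] using (hBcont.tendsto 0).mono_left nhdsWithin_le_nhds
      simpa using (hEl.div hwl hgw).sub hBl
    have hFlim2 : Tendsto F (nhdsWithin 0 (Set.Ioi 0)) (nhds (F τ)) := by
      apply Tendsto.congr' _ tendsto_const_nhds
      filter_upwards [Ioo_mem_nhdsGT_of_mem (Set.left_mem_Ico.2 hτ)] with x hx
      exact (hFconst x ⟨hx.1, hx.2.le⟩).symm
    have hFτ : F τ = 1 / (g * w τ) := tendsto_nhds_unique hFlim2 hFlim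
    intro t ht
    exact hFτ ▸ hFconst t ht
  -- value at τ is determined
  have keyτ : ∀ w : ℝ → ℝ, IsPeriodicPulseLogisticSolution τ γ g a w →
      w τ = (E τ - 1 / g) / B τ ∧ 1 < g * E τ := by
    intro w hw
    have h := key w hw τ ⟨hτ, le_refl τ⟩
    have hwτ : 0 < w τ := hw.2.1 τ ⟨hτ, le_refl τ⟩
    have hwτ' : w τ ≠ 0 := ne_of_gt hwτ
    have heq : w τ * B τ = E τ - 1 / g := by
      field_simp at h
      have h2 : (E τ - w τ * B τ) * g = 1 := by
        apply mul_right_cancel₀ hwτ'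
        linear_combination w τ * h
      field_simp
      linear_combination -h2
    constructor
    · rw [← heq, mul_div_assoc, div_self (ne_of_gt hBτ), mul_one]
    · have : 0 < E τ - 1 / g := by
        rw [← heq]; positivity
      rw [show (1:ℝ) < g * E τ ↔ 1 / g < E τ by
        rw [div_lt_iff₀ hg]; constructor <;> intro h' <;> nlinarith]
      linarith
  constructor
  · constructor
    · rintro ⟨w, hw⟩
      exact hcond.2 (keyτ w hw).2
    · -- existence
      intro hpos
      have hge : 1 < g * E τ := hcond.1 hpos
      set c : ℝ := B τ / (g * E τ - 1) with hcdef
      have hc : 0 < c := div_pos hBτ (by linarith)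
      refine ⟨fun t => E t / (c + B t), ?_, ?_, ?_, ?_⟩
      · apply ContinuousOn.div hEcont.continuousOn (continuous_const.add hBcont).continuousOn
        intro t ht
        have := hBnonneg t ht.1.le
        exact (add_pos_of_pos_of_nonneg hc this).ne'
      · intro t ht
        have := hBnonneg t ht.1.le
        positivity
      · intro t ht
        have hden : 0 < c + B t := by
          have := hBnonneg t ht.1.le; positivity
        have h1 := (hE t).div ((hB t).const_add c) (ne_of_gt hden)
        refine h1.congr_deriv ?_
        field_simp
      · have hpos' : (0:ℝ) < g * E τ - 1 := by linarith
        have hden0 : c + B 0 ≠ 0 := by rw [hB0]; positivity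
        have hdenτ : (0:ℝ) < c + B τ := by
          have := hBnonneg τ hτ.le; positivity
        have hlim : Tendsto (fun t => E t / (c + B t)) (nhdsWithin 0 (Set.Ioi 0))
            (nhds (E 0 / (c + B 0))) :=
          ((hEcont.tendsto 0).div ((continuous_const.add hBcont).tendsto 0)
            hden0).mono_left nhdsWithin_le_nhds
        have hval : E 0 / (c + B 0) = g * (E τ / (c + B τ)) := by
          have hBne : B τ ≠ 0 := ne_of_gt hBτ
          have hne : g * E τ - 1 ≠ 0 := ne_of_gt hpos'
          have hEne : E τ ≠ 0 := ne_of_gt (hEpos τ)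
          rw [hE0, hB0, add_zero, hcdef]
          field_simp
          ring
        exact hval ▸ hlim
  · -- uniqueness
    intro w₁ w₂ h₁ h₂ t ht
    have hτ1 := (keyτ w₁ h₁).1
    have hτ2 := (keyτ w₂ h₂).1
    have hττ : w₁ τ = w₂ τ := by rw [hτ1, hτ2]
    have k1 := key w₁ h₁ t ht
    have k2 := key w₂ h₂ t ht
    rw [hττ] at k1
    have : E t / w₁ t = E t / w₂ t := by rw [← k2] at k1; linarith
    have hw1 : w₁ t ≠ 0 := ne_of_gt (h₁.2.1 t ht)
    have hw2 : w₂ t ≠ 0 := ne_of_gt (h₂.2.1 t ht)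
    have hEt : E t ≠ 0 := ne_of_gt (hEpos t)
    rw [div_eq_div_iff hw1 hw2] at this
    exact (mul_left_cancel₀ hEt this).symm
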